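/- Let C be an [n, k, d] MDS code over F_q with d = n-k+1, and let b ≥ 2 with d + b - 1 < n. Then every nonzero codeword of C has b-weight at least d + b - 1; that is, A^b(w) = 0 for 1 ≤ w ≤ d + b - 2. -/

import Mathlib

/-- The cyclic `b`-weight of `x : ZMod n → F`. -/
noncomputable def wtb {F : Type*} [Zero F] {n : ℕ} (b : ℕ) (x : ZMod n → F) : ℕ :=
  Nat.card {i : ZMod n // ∃ j < b, x (i + (j : ZMod n)) ≠ 0}

open Finset Pointwise in
lemma covering_lemma {F : Type*} [Zero F] [DecidableEq F] {n : ℕ} [NeZero n] (b : ℕ) (hb : 1 ≤ b)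
    (c : ZMod n → F) (i0 : ZMod n) (h0 : ∀ j < b, c (i0 + (j : ZMod n)) = 0)
    (hc : c ≠ 0) :
    hammingNorm c + b - 1 ≤ Nat.card {i : ZMod n // ∃ j < b, c (i + (j : ZMod n)) ≠ 0} := by
  classical
  set S : Finset (ZMod n) := univ.filter (fun x => c x ≠ 0) with hS
  have hSne : S.Nonempty := by
    obtain ⟨x, hx⟩ := Function.ne_iff.1 hc
    exact ⟨x, by simp only [hS, mem_filter, mem_univ, true_and]; simpa using hx⟩
  have hval : ∀ a : ZMod n, ((a.val : ZMod n)) = a := fun a => by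
    rw [ZMod.natCast_val, ZMod.cast_id]
  set A : Finset ℤ := S.image (fun x => ((x - i0).val : ℤ)) with hA
  set B : Finset ℤ := (range b).image (fun j : ℕ => -(j : ℤ)) with hB
  have hAcard : A.card = S.card := by
    rw [hA]
    apply card_image_of_injective
    intro x y hxy
    have h1 : (x - i0).val = (y - i0).val := Nat.cast_inj (R := ℤ) |>.mp (by simpa using hxy)
    have h2 : x - i0 = y - i0 := ZMod.val_injective n h1
    exact sub_left_injective h2
  have hBcard : B.card = b := by
    rw [hB, card_image_of_injective, card_range]
    intro x y hxy
    exact_mod_cast neg_injective hxy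
  have hAmem : ∀ z ∈ A, (b : ℤ) ≤ z ∧ z ≤ (n : ℤ) - 1 := by
    intro z hz
    rw [hA, mem_image] at hz
    obtain ⟨x, hx, rfl⟩ := hz
    have hxne : c x ≠ 0 := by simpa [hS] using hx
    have hlt : (x - i0).val < n := ZMod.val_lt _
    constructor
    · by_contra h
      push_neg at h
      have hjb : (x - i0).val < b := by exact_mod_cast h
      have : c (i0 + (((x - i0).val : ℕ) : ZMod n)) = 0 := h0 _ hjb
      rw [hval] at this
      simp only [add_sub_cancel] at this
      exact hxne this
    · omega
  have hCD : A.card + B.card - 1 ≤ (A + B).card :=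
    cauchy_davenport_add_of_linearOrder_isCancelAdd (hSne.image _) ⟨0, mem_image.2 ⟨0, mem_range.2 (by omega), by simp⟩⟩
  set T : Finset (ZMod n) := univ.filter (fun i => ∃ j < b, c (i + (j : ZMod n)) ≠ 0) with hT
  have hmapmem : ∀ z ∈ A + B, ((z : ZMod n) + i0) ∈ T := by
    intro z hz
    rw [mem_add] at hz
    obtain ⟨a, ha, e, he, rfl⟩ := hz
    rw [hA, mem_image] at ha
    obtain ⟨x, hx, rfl⟩ := ha
    rw [hB, mem_image] at he
    obtain ⟨j, hj, rfl⟩ := he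
    rw [mem_range] at hj
    have hxne : c x ≠ 0 := by simpa [hS] using hx
    have : ((((x - i0).val : ℤ) + -(j : ℤ) : ℤ) : ZMod n) + i0 = x - (j : ZMod n) := by
      push_cast
      rw [hval]
      ring
    rw [this, hT, mem_filter]
    refine ⟨mem_univ _, j, hj, ?_⟩
    rwa [sub_add_cancel]
  have hmapinj : Set.InjOn (fun z : ℤ => ((z : ZMod n) + i0)) ↑(A + B) := by
    intro z1 h1 z2 h2 heq
    simp only at heq
    have hb1 : ∀ z ∈ A + B, 0 ≤ z ∧ z < n := by
      intro z hz
      rw [mem_add] at hz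
      obtain ⟨a, ha, e, he, rfl⟩ := hz
      obtain ⟨ha1, ha2⟩ := hAmem a ha
      rw [hB, mem_image] at he
      obtain ⟨j, hj, rfl⟩ := he
      rw [mem_range] at hj
      constructor <;> [omega; omega]
    obtain ⟨hz10, hz1n⟩ := hb1 z1 (mem_coe.1 h1)
    obtain ⟨hz20, hz2n⟩ := hb1 z2 (mem_coe.1 h2)
    have : (z1 : ZMod n) = (z2 : ZMod n) := by
      exact add_right_cancel heq
    have hmod := (ZMod.intCast_eq_intCast_iff _ _ _).1 this
    have hmm : z1 % (n : ℤ) = z2 % (n : ℤ) := hmod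
    rwa [Int.emod_eq_of_lt hz10 hz1n, Int.emod_eq_of_lt hz20 hz2n] at hmm
  have hcardle : (A + B).card ≤ T.card := by
    rw [← card_image_of_injOn hmapinj]
    apply card_le_card
    intro y hy
    rw [mem_image] at hy
    obtain ⟨z, hz, rfl⟩ := hy
    exact hmapmem z hz
  have hNat : Nat.card {i : ZMod n // ∃ j < b, c (i + (j : ZMod n)) ≠ 0} = T.card := by
    rw [Nat.card_eq_fintype_card, hT]
    exact Fintype.card_subtype _
  have hnorm : hammingNorm c = S.card := rfl
  omega

/-- For an `[n,k,d]` MDS code `C` with `b ≥ 2` and `d + b - 1 < n`, every nonzero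
codeword has `b`-weight at least `d + b - 1`; equivalently `A^b(w) = 0` for
`1 ≤ w ≤ d + b - 2`. -/
theorem mds_bweight_zero_range
    {F : Type*} [Field F] [Fintype F] [DecidableEq F] {n : ℕ} [NeZero n]
    (k d b : ℕ) (C : Submodule F (ZMod n → F))
    (hk : Module.finrank F C = k)
    (hmin : ∀ c ∈ C, c ≠ 0 → d ≤ hammingNorm c)
    (hex : ∃ c ∈ C, c ≠ 0 ∧ hammingNorm c = d)
    (hMDS : d = n - k + 1)
    (hb : 2 ≤ b) (hdb : d + b - 1 < n) :
    (∀ c ∈ C, c ≠ 0 → d + b - 1 ≤ wtb b c) ∧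
    (∀ w, 1 ≤ w → w ≤ d + b - 2 →
      Nat.card {c : C // wtb b (c : ZMod n → F) = w} = 0) := by
  classical
  have hd1 : 1 ≤ d := by
    obtain ⟨c, hcC, hc0, hcd⟩ := hex
    have := hammingNorm_pos_iff.2 hc0
    omega
  have part1 : ∀ c ∈ C, c ≠ 0 → d + b - 1 ≤ wtb b c := by
    intro c hcC hc0
    by_cases hall : ∀ i : ZMod n, ∃ j < b, c (i + (j : ZMod n)) ≠ 0
    · have : wtb b c = n := by
        rw [wtb, Nat.card_congr (Equiv.subtypeUnivEquiv hall), Nat.card_eq_fintype_card,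
          ZMod.card]
      omega
    · push_neg at hall
      obtain ⟨i0, h0⟩ := hall
      have key := covering_lemma b (by omega) c i0 h0 hc0
      have hdn := hmin c hcC hc0
      rw [wtb]
      omega
  refine ⟨part1, ?_⟩
  intro w hw1 hw2
  have hE : IsEmpty {c : C // wtb b (c : ZMod n → F) = w} := by
    constructor
    rintro ⟨⟨c, hcC⟩, hwc⟩
    simp only at hwc
    by_cases h : c = 0
    · subst h
      have h0 : wtb b (0 : ZMod n → F) = 0 := by
        rw [wtb]
        have : IsEmpty {i : ZMod n // ∃ j < b, (0 : ZMod n → F) (i + (j : ZMod n)) ≠ 0} := by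
          constructor
          rintro ⟨i, j, hj, hne⟩
          exact hne rfl
        exact Nat.card_of_isEmpty
      omega
    · have := part1 c hcC h
      omega
  exact Nat.card_eq_zero.2 (Or.inl hE)
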